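/- With κ₁ = 0 and κ₂ > 0, the antiphase bifurcation amplitude r_anti, defined as the root near r_m of σ r²(r² − r_m²) = 2κ₂ (i.e., det(J_anti) = 0), satisfies r_anti = r_m(1 + κ₂/(σ r_m⁴)) + O(κ₂²); in particular r_in < r_m < r_anti for small κ₂ > 0. -/

import Mathlib

/-- Determinant of the antiphase transverse Jacobian block. -/
def detJanti (u σ rm κ₁ κ₂ r : ℝ) : ℝ :=
  2 * (u + 6 * r ^ 2 - 5 * r ^ 4) * κ₁ + 2 * σ * r ^ 2 * (rm ^ 2 - r ^ 2) * κ₂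
    + 2 * κ₁ ^ 2 + 4 * κ₂ ^ 2

theorem stmt_12 (σ rm : ℝ) (hσ : 0 < σ) (hrm : 0 < rm) :
    (∀ u κ₂ r : ℝ, 0 < κ₂ → 0 < r →
      (detJanti u σ rm 0 κ₂ r = 0 ↔ σ * r ^ 2 * (r ^ 2 - rm ^ 2) = 2 * κ₂)) ∧
    (∀ κ₂ r : ℝ, 0 < κ₂ → 0 < r →
      (σ * r ^ 2 * (rm ^ 2 - r ^ 2) = 2 * κ₂ → r < rm) ∧
      (σ * r ^ 2 * (r ^ 2 - rm ^ 2) = 2 * κ₂ → rm < r)) ∧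
    (∃ C ε : ℝ, 0 < C ∧ 0 < ε ∧
      ∀ κ₂ ranti : ℝ, 0 < κ₂ → κ₂ < ε → 0 < ranti →
        σ * ranti ^ 2 * (ranti ^ 2 - rm ^ 2) = 2 * κ₂ →
        |ranti - rm * (1 + κ₂ / (σ * rm ^ 4))| ≤ C * κ₂ ^ 2) := by
  have main2 : ∀ κ₂ r : ℝ, 0 < κ₂ → 0 < r →
      σ * r ^ 2 * (r ^ 2 - rm ^ 2) = 2 * κ₂ → rm < r := by
    intro κ₂ r hκ hr h
    have hq : 0 < r ^ 2 - rm ^ 2 := by nlinarith [mul_pos hσ (pow_pos hr 2)]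
    nlinarith [hq, add_pos hr hrm]
  refine ⟨?_, ?_, ?_⟩
  · intro u κ₂ r hκ hr
    unfold detJanti
    constructor
    · intro h
      have hne : (2 * κ₂) ≠ 0 := by positivity
      have h2 : (2 * κ₂) * (σ * r ^ 2 * (r ^ 2 - rm ^ 2)) = (2 * κ₂) * (2 * κ₂) := by
        linear_combination -h
      exact mul_left_cancel₀ hne h2
    · intro h
      linear_combination (-2 * κ₂) * h
  · intro κ₂ r hκ hr
    refine ⟨?_, main2 κ₂ r hκ hr⟩
    intro h
    have hq : 0 < rm ^ 2 - r ^ 2 := by nlinarith [mul_pos hσ (pow_pos hr 2)]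
    nlinarith [hq, add_pos hr hrm]
  · refine ⟨5 / (σ ^ 2 * rm ^ 7), σ * rm ^ 4, by positivity, by positivity, ?_⟩
    intro κ₂ r hκ hε hr h
    set d : ℝ := κ₂ / (σ * rm ^ 3) with hd_def
    have hσrm : (σ * rm ^ 3) ≠ 0 := by positivity
    have hdκ : κ₂ = d * (σ * rm ^ 3) := by rw [hd_def, div_mul_cancel₀ κ₂ hσrm]
    have hd : 0 < d := by positivity
    have hdlt : d < rm := by
      rw [hdκ] at hε
      nlinarith [mul_pos hσ (pow_pos hrm 3)]
    have hrgt : rm < r := main2 κ₂ r hκ hr h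
    -- the equation divided by σ
    have E : r ^ 4 - rm ^ 2 * r ^ 2 = 2 * d * rm ^ 3 := by
      have h2 : σ * (r ^ 4 - rm ^ 2 * r ^ 2) = σ * (2 * d * rm ^ 3) := by
        rw [hdκ] at h; linear_combination h
      exact mul_left_cancel₀ (ne_of_gt hσ) h2
    have hA : rm * (1 + κ₂ / (σ * rm ^ 4)) = rm + d := by
      rw [hd_def]; field_simp
    rw [hA]
    -- key identity
    have key : (r - (rm + d)) * ((r + (rm + d)) * (r ^ 2 + (rm + d) ^ 2 - rm ^ 2))
        = -(d ^ 2 * (5 * rm ^ 2 + 4 * rm * d + d ^ 2)) := by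
      linear_combination E
    have h1 : 2 * rm ≤ r + (rm + d) := by linarith
    have h2 : rm ^ 2 ≤ r ^ 2 + (rm + d) ^ 2 - rm ^ 2 := by
      nlinarith [mul_pos (sub_pos.mpr hrgt) (add_pos hrm hr), mul_pos hrm hd, sq_nonneg d]
    have hfac : 2 * rm ^ 3 ≤ (r + (rm + d)) * (r ^ 2 + (rm + d) ^ 2 - rm ^ 2) := by
      calc 2 * rm ^ 3 = (2 * rm) * rm ^ 2 := by ring
        _ ≤ (r + (rm + d)) * (r ^ 2 + (rm + d) ^ 2 - rm ^ 2) :=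
          mul_le_mul h1 h2 (by positivity) (by linarith)
    have hpos : 0 < (r + (rm + d)) * (r ^ 2 + (rm + d) ^ 2 - rm ^ 2) := by
      have : (0:ℝ) < 2 * rm ^ 3 := by positivity
      linarith
    have hrhs : d ^ 2 * (5 * rm ^ 2 + 4 * rm * d + d ^ 2) ≤ 10 * rm ^ 2 * d ^ 2 := by
      nlinarith [mul_nonneg (mul_nonneg (sq_nonneg d) (sub_pos.mpr hdlt).le) hrm.le,
        mul_nonneg (sq_nonneg d) (mul_nonneg (sub_pos.mpr hdlt).le
          (by positivity : (0:ℝ) ≤ rm + d))]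
    have hQ : 0 < d ^ 2 * (5 * rm ^ 2 + 4 * rm * d + d ^ 2) := by positivity
    have hneg : r - (rm + d) < 0 := by
      by_contra hcon
      push_neg at hcon
      have := mul_nonneg hcon hpos.le
      linarith [key ▸ this]
    have hCval : (5 / (σ ^ 2 * rm ^ 7)) * κ₂ ^ 2 = 5 * d ^ 2 / rm := by
      rw [hdκ]; field_simp
    rw [hCval, abs_le]
    constructor
    · -- lower bound
      have hkey' : (rm + d - r) * ((r + (rm + d)) * (r ^ 2 + (rm + d) ^ 2 - rm ^ 2))
          = d ^ 2 * (5 * rm ^ 2 + 4 * rm * d + d ^ 2) := by linear_combination -key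
      have hh : (rm + d - r) * (2 * rm ^ 3)
          ≤ (rm + d - r) * ((r + (rm + d)) * (r ^ 2 + (rm + d) ^ 2 - rm ^ 2)) :=
        mul_le_mul_of_nonneg_left hfac (by linarith)
      have h1' : (rm + d - r) * (2 * rm ^ 3) ≤ 10 * rm ^ 2 * d ^ 2 := by
        calc (rm + d - r) * (2 * rm ^ 3) ≤ _ := hh
          _ = d ^ 2 * (5 * rm ^ 2 + 4 * rm * d + d ^ 2) := hkey'
          _ ≤ 10 * rm ^ 2 * d ^ 2 := hrhs
      rw [neg_le, neg_sub, le_div_iff₀ hrm]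
      nlinarith [h1', pow_pos hrm 2]
    · have : (0:ℝ) ≤ 5 * d ^ 2 / rm := by positivity
      linarith
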